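/- The key identity for the inverse separating operator: det_L[D_{x_i}^{2(L-j)} φ_μ(x_i)] = (-1)^{L(L-1)/2} · a_μ(x_1,...,x_L) / a^{(1)}_μ, where the (i,j) entry is the operator D_{x_i}^{2(L-j)} applied to φ_μ(x_i). -/

import Mathlib

open Finset

/-- The Euler operator `D_z = z d/dz`. -/
noncomputable def eulerOp (f : ℝ → ℝ) : ℝ → ℝ := fun z => z * deriv f z

/-- `φ_μ(z) = Σ_j (z^{μ_j} - z^{-μ_j})/(μ_j ∏_{i≠j}(μ_j² - μ_i²))`. -/
noncomputable def phiFun {L : ℕ} (μ : Fin L → ℕ) : ℝ → ℝ :=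
  fun z => ∑ j : Fin L,
    (z ^ ((μ j : ℤ)) - z ^ (-(μ j : ℤ))) /
      ((μ j : ℝ) * ∏ i ∈ Finset.univ.erase j, ((μ j : ℝ) ^ 2 - (μ i : ℝ) ^ 2))

namespace InvSep

variable {L : ℕ}

noncomputable def coef (μ : Fin L → ℕ) (j : Fin L) : ℝ :=
  1 / ((μ j : ℝ) * ∏ i ∈ Finset.univ.erase j, ((μ j : ℝ) ^ 2 - (μ i : ℝ) ^ 2))

noncomputable def Fk (μ : Fin L → ℕ) (k : ℕ) : ℝ → ℝ := fun z =>
  ∑ j : Fin L, coef μ j * (μ j : ℝ) ^ k *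
    (z ^ ((μ j : ℤ)) + (-1 : ℝ) ^ (k + 1) * z ^ (-(μ j : ℤ)))

lemma Fk_zero (μ : Fin L → ℕ) : Fk μ 0 = phiFun μ := by
  funext z
  unfold Fk phiFun coef
  refine Finset.sum_congr rfl fun j _ => ?_
  ring

lemma hasDerivAt_Fk (μ : Fin L → ℕ) (k : ℕ) {z : ℝ} (hz : z ≠ 0) :
    HasDerivAt (Fk μ k)
      (∑ j : Fin L, coef μ j * (μ j : ℝ) ^ k *
        (((μ j : ℤ) : ℝ) * z ^ ((μ j : ℤ) - 1) +
          (-1 : ℝ) ^ (k + 1) * (((-(μ j : ℤ) : ℤ) : ℝ) * z ^ (-(μ j : ℤ) - 1)))) z := by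
  apply HasDerivAt.fun_sum
  intro j _
  exact ((hasDerivAt_zpow (μ j : ℤ) z (Or.inl hz)).add
    ((hasDerivAt_zpow (-(μ j : ℤ)) z (Or.inl hz)).const_mul ((-1 : ℝ) ^ (k + 1)))).const_mul _

lemma mul_deriv_Fk (μ : Fin L → ℕ) (k : ℕ) {z : ℝ} (hz : z ≠ 0) :
    z * (∑ j : Fin L, coef μ j * (μ j : ℝ) ^ k *
        (((μ j : ℤ) : ℝ) * z ^ ((μ j : ℤ) - 1) +
          (-1 : ℝ) ^ (k + 1) * (((-(μ j : ℤ) : ℤ) : ℝ) * z ^ (-(μ j : ℤ) - 1))))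
      = Fk μ (k + 1) z := by
  unfold Fk
  rw [Finset.mul_sum]
  refine Finset.sum_congr rfl fun j _ => ?_
  rw [zpow_sub_one₀ hz, zpow_sub_one₀ hz]
  push_cast
  rw [pow_succ (-1 : ℝ) (k + 1), pow_succ (μ j : ℝ) k]
  field_simp

lemma iterate_eulerOp (μ : Fin L → ℕ) (k : ℕ) :
    ∀ z : ℝ, z ≠ 0 → eulerOp^[k] (phiFun μ) z = Fk μ k z := by
  induction k with
  | zero => intro z _; simp [Fk_zero]
  | succ k ih =>
    intro z hz
    rw [Function.iterate_succ_apply']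
    show z * deriv (eulerOp^[k] (phiFun μ)) z = _
    have hev : eulerOp^[k] (phiFun μ) =ᶠ[nhds z] Fk μ k := by
      filter_upwards [eventually_ne_nhds hz] with y hy using ih y hy
    rw [hev.deriv_eq, (hasDerivAt_Fk μ k hz).deriv, mul_deriv_Fk μ k hz]

lemma Fk_even (μ : Fin L → ℕ) (n : ℕ) (z : ℝ) :
    Fk μ (2 * n) z = ∑ j : Fin L,
      (z ^ ((μ j : ℤ)) - z ^ (-(μ j : ℤ))) * (coef μ j * ((μ j : ℝ) ^ 2) ^ n) := by
  unfold Fk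
  refine Finset.sum_congr rfl fun j _ => ?_
  have h1 : (-1 : ℝ) ^ (2 * n + 1) = -1 := by
    rw [pow_succ, pow_mul]; norm_num
  rw [h1, ← pow_mul]
  ring

def S (L : ℕ) : Finset (Fin L × Fin L) := univ.filter (fun p => p.1 < p.2)

lemma prod_Ioi_pairs (f : Fin L → Fin L → ℝ) :
    ∏ i : Fin L, ∏ j ∈ Ioi i, f i j = ∏ p ∈ S L, f p.1 p.2 := by
  rw [Finset.prod_sigma' univ (fun i => Ioi i) f]
  refine Finset.prod_bij' (fun a _ => (a.1, a.2)) (fun p _ => ⟨p.1, p.2⟩) ?_ ?_ ?_ ?_ ?_ <;>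
    simp [S, mem_sigma]

lemma prod_Iio_pairs (f : Fin L → Fin L → ℝ) :
    ∏ i : Fin L, ∏ j ∈ Iio i, f i j = ∏ p ∈ S L, f p.2 p.1 := by
  rw [Finset.prod_sigma' univ (fun i => Iio i) f]
  refine Finset.prod_bij' (fun a _ => (a.2, a.1)) (fun p _ => ⟨p.2, p.1⟩) ?_ ?_ ?_ ?_ ?_ <;>
    simp [S, mem_sigma]

lemma prod_pairs_rev (f : Fin L → Fin L → ℝ) :
    ∏ p ∈ S L, f p.1 p.2 = ∏ p ∈ S L, f p.2.rev p.1.rev := by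
  refine Finset.prod_bij' (fun p _ => (p.2.rev, p.1.rev)) (fun p _ => (p.2.rev, p.1.rev))
    ?_ ?_ ?_ ?_ ?_ <;> simp [S, Fin.rev_lt_rev]

lemma card_S : (S L).card = L * (L - 1) / 2 := by
  have hmap : (univ.filter (fun p : Fin L × Fin L => p.2 < p.1)).card = (S L).card := by
    refine Finset.card_bij' (fun p _ => (p.2, p.1)) (fun p _ => (p.2, p.1)) ?_ ?_ ?_ ?_ <;>
      simp [S]
  have hdisj : Disjoint (S L) (univ.filter (fun p : Fin L × Fin L => p.2 < p.1)) := by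
    rw [Finset.disjoint_left]
    intro p hp hp'
    simp [S] at hp hp'
    exact absurd hp' (not_lt.2 hp.le)
  have hunion : S L ∪ univ.filter (fun p : Fin L × Fin L => p.2 < p.1)
      = (univ : Finset (Fin L)).offDiag := by
    ext p
    simp only [S, mem_union, mem_filter, mem_univ, true_and, Finset.mem_offDiag,
      ne_iff_lt_or_gt]
  have hcard := Finset.card_union_of_disjoint hdisj
  rw [hunion, Finset.offDiag_card, hmap] at hcard
  simp only [Finset.card_univ, Fintype.card_fin] at hcard
  have h2 : L * L - L = L * (L - 1) := by
    cases L with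
    | zero => simp
    | succ n => rw [Nat.succ_sub_one, Nat.mul_succ]; ring_nf; omega
  omega

lemma erase_eq_Iio_union_Ioi (k : Fin L) :
    (univ : Finset (Fin L)).erase k = Iio k ∪ Ioi k := by
  ext i
  simp only [mem_erase, mem_union, mem_Iio, mem_Ioi, mem_univ, and_true, ne_iff_lt_or_gt]

lemma det_revVandermonde (w : Fin L → ℝ) :
    Matrix.det (Matrix.of fun k j : Fin L => w k ^ (L - 1 - (j : ℕ)))
      = ∏ p ∈ S L, (w p.1 - w p.2) := by
  have h : (Matrix.of fun k j : Fin L => w k ^ (L - 1 - (j : ℕ)))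
      = (Matrix.vandermonde (w ∘ Fin.rev)).submatrix Fin.revPerm Fin.revPerm := by
    ext k j
    simp only [Matrix.of_apply, Matrix.submatrix_apply, Matrix.vandermonde_apply,
      Function.comp_apply, Fin.revPerm_apply, Fin.rev_rev]
    congr 1
    rw [Fin.val_rev]
    omega
  rw [h, Matrix.det_submatrix_equiv_self, Matrix.det_vandermonde]
  simp only [Function.comp_apply]
  rw [prod_Ioi_pairs (fun i j => w (Fin.rev j) - w (Fin.rev i)),
    prod_pairs_rev (fun a b => w a - w b)]

end InvSep

open InvSep in
/-- Key identity for the inverse separating operator: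
`det[D_{x_i}^{2(L-j)} φ_μ(x_i)] = (-1)^{L(L-1)/2} a_μ(x) / a^{(1)}_μ`. -/
theorem inverse_separating_identity (L : ℕ) (μ : Fin L → ℕ)
    (hpos : ∀ i, 0 < μ i) (hanti : ∀ i j : Fin L, i < j → μ j < μ i)
    (x : Fin L → ℝ) (hx : ∀ i, x i ≠ 0) :
    Matrix.det (Matrix.of fun i j : Fin L =>
        (eulerOp^[2 * (L - 1 - (j : ℕ))] (phiFun μ)) (x i)) =
      (-1 : ℝ) ^ (L * (L - 1) / 2) *
        Matrix.det (Matrix.of fun i j : Fin L =>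
          x i ^ ((μ j : ℤ)) - x i ^ (-(μ j : ℤ))) /
        ((∏ i : Fin L, (μ i : ℝ)) *
          ∏ p ∈ Finset.univ.filter (fun p : Fin L × Fin L => p.1 < p.2),
            ((μ p.1 : ℝ) ^ 2 - (μ p.2 : ℝ) ^ 2)) := by
  classical
  set w : Fin L → ℝ := fun k => (μ k : ℝ) ^ 2 with hw
  set A : Matrix (Fin L) (Fin L) ℝ :=
    Matrix.of fun i k : Fin L => x i ^ ((μ k : ℤ)) - x i ^ (-(μ k : ℤ)) with hA
  set V : Matrix (Fin L) (Fin L) ℝ := Matrix.of fun k j : Fin L => w k ^ (L - 1 - (j : ℕ)) with hV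
  set Q : ℝ := ∏ p ∈ S L, (w p.1 - w p.2) with hQ
  set C : ℕ := L * (L - 1) / 2 with hC
  -- matrix factorization
  have hM : (Matrix.of fun i j : Fin L =>
      (eulerOp^[2 * (L - 1 - (j : ℕ))] (phiFun μ)) (x i))
      = A * Matrix.of (fun k j : Fin L => coef μ k * V k j) := by
    ext i j
    rw [Matrix.mul_apply]
    simp only [Matrix.of_apply]
    rw [iterate_eulerOp μ _ _ (hx i), Fk_even]
    exact Finset.sum_congr rfl fun k _ => by simp only [hA, hV, hw, Matrix.of_apply]; try ring
  rw [hM, Matrix.det_mul, Matrix.det_mul_column, det_revVandermonde w]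
  -- product of coefficients
  have hEr : ∀ k, ∏ i ∈ Finset.univ.erase k, (w k - w i)
      = (∏ i ∈ Iio k, (w k - w i)) * ∏ i ∈ Ioi k, (w k - w i) := by
    intro k
    rw [erase_eq_Iio_union_Ioi, Finset.prod_union]
    rw [Finset.disjoint_left]
    intro a ha ha'
    exact absurd (mem_Ioi.1 ha') (not_lt.2 (mem_Iio.1 ha).le)
  have hP : (∏ k, ∏ i ∈ Finset.univ.erase k, (w k - w i)) = (-1 : ℝ) ^ C * Q * Q := by
    calc (∏ k, ∏ i ∈ Finset.univ.erase k, (w k - w i))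
        = (∏ k, ∏ i ∈ Iio k, (w k - w i)) * ∏ k, ∏ i ∈ Ioi k, (w k - w i) := by
          rw [← Finset.prod_mul_distrib]; exact Finset.prod_congr rfl fun k _ => hEr k
      _ = (∏ p ∈ S L, (w p.2 - w p.1)) * Q := by
          rw [prod_Iio_pairs (fun a b => w a - w b),
            prod_Ioi_pairs (fun a b => w a - w b)]
      _ = ((-1 : ℝ) ^ C * Q) * Q := by
          congr 1
          have : ∏ p ∈ S L, (w p.2 - w p.1) = ∏ p ∈ S L, (-1 : ℝ) * (w p.1 - w p.2) :=
            Finset.prod_congr rfl fun p _ => by ring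
          rw [this, Finset.prod_mul_distrib, Finset.prod_const, card_S, hQ]
      _ = (-1 : ℝ) ^ C * Q * Q := by ring
  have hcoef : (∏ k, coef μ k)
      = 1 / ((∏ k, (μ k : ℝ)) * ((-1 : ℝ) ^ C * Q * Q)) := by
    unfold coef
    rw [← hP]
    rw [← Finset.prod_mul_distrib]
    rw [Finset.prod_div_distrib]
    simp [hw]
  -- nonvanishing
  have hμ : (∏ k, (μ k : ℝ)) ≠ 0 := by
    refine Finset.prod_ne_zero_iff.2 fun k _ => ?_
    exact_mod_cast (hpos k).ne'
  have hQ0 : Q ≠ 0 := by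
    refine Finset.prod_ne_zero_iff.2 fun p hp => ?_
    have hlt : p.1 < p.2 := by simpa [S] using hp
    have h1 : (μ p.2 : ℝ) < (μ p.1 : ℝ) := by exact_mod_cast hanti p.1 p.2 hlt
    have h0 : (0 : ℝ) ≤ (μ p.2 : ℝ) := by positivity
    have : w p.2 < w p.1 := by simp only [hw]; nlinarith
    exact sub_ne_zero_of_ne (ne_of_gt (by linarith))
  -- final algebra
  rw [hcoef]
  have hfil : (∏ p ∈ Finset.univ.filter (fun p : Fin L × Fin L => p.1 < p.2),
      ((μ p.1 : ℝ) ^ 2 - (μ p.2 : ℝ) ^ 2)) = Q := by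
    rw [hQ]; rfl
  rw [hfil]
  have hs : (-1 : ℝ) ^ C * (-1 : ℝ) ^ C = 1 := by
    rw [← pow_add]
    exact Even.neg_one_pow ⟨C, by ring⟩
  have hsne : ((-1 : ℝ) ^ C) ≠ 0 := pow_ne_zero _ (by norm_num)
  field_simp
  linear_combination (-1 : ℝ) * Matrix.det A * (∏ p ∈ S L, (w p.1 - w p.2)) * hs
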